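/- If an extension 0 → L → A → B → 0 of Lie-Rinehart algebras inducing the coupling ᾱ exists (with B projective over R), then the obstruction class ob(ᾱ) = [d_α ρ] ∈ H³(B; Z(L)) vanishes. Conversely, if ob(ᾱ) = 0 then such an extension exists. -/

import Mathlib

/-- The order-preserving inclusion `Fin (n-1) → Fin n` skipping the index `j`. -/
def skipIdx {n : ℕ} (j : Fin n) (m : Fin (n - 1)) : Fin n :=
  if (m : ℕ) < (j : ℕ) then ⟨m, by have := m.isLt; omega⟩
  else ⟨(m : ℕ) + 1, by have := m.isLt; omega⟩

/-- The Chevalley–Eilenberg/de Rham differential of an `M`-valued `p`-form on a Lie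
algebroid `B`, twisted by a connection `α : B → (M → M)`. -/
def dform {B M : Type*} [LieRing B] [AddCommGroup M]
    (α : B → M → M) (p : ℕ) (ξ : (Fin p → B) → M) :
    (Fin (p + 1) → B) → M :=
  fun s =>
    (∑ i : Fin (p + 1), ((-1 : ℤ) ^ (i : ℕ)) • α (s i) (ξ (s ∘ i.succAbove))) +
      ∑ i : Fin (p + 1), ∑ j : Fin p,
        if (i : ℕ) ≤ (j : ℕ) then
          ((-1 : ℤ) ^ ((i : ℕ) + (j : ℕ) + 1)) •
            ξ (fun m : Fin p =>
              if hm : (m : ℕ) = 0 then ⁅s i, s (i.succAbove j)⁆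
              else s (i.succAbove (skipIdx j ⟨(m : ℕ) - 1, by have := m.isLt; omega⟩)))
        else 0

universe u v w x

section AuxAlt
variable {R B L : Type*} [CommRing R] [AddCommGroup B] [Module R B]
    [AddCommGroup L] [Module R L]

/-- Build an alternating `2`-form from a suitable binary map. -/
def mkAlt2 (g : B → B → L)
    (hal : ∀ a a' b, g (a + a') b = g a b + g a' b)
    (har : ∀ a b b', g a (b + b') = g a b + g a b')
    (hsl : ∀ (f : R) (a b : B), g (f • a) b = f • g a b)
    (hsr : ∀ (f : R) (a b : B), g a (f • b) = f • g a b)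
    (hd : ∀ a, g a a = 0) : B [⋀^Fin 2]→ₗ[R] L where
  toFun v := g (v 0) (v 1)
  map_update_add' := by
    intro dec m i x y
    fin_cases i
    · simp only [Function.update, Fin.ext_iff]
      simp [hal]
    · simp only [Function.update, Fin.ext_iff]
      simp [har]
  map_update_smul' := by
    intro dec m i c x
    fin_cases i
    · simp only [Function.update, Fin.ext_iff]
      simp [hsl]
    · simp only [Function.update, Fin.ext_iff]
      simp [hsr]
  map_eq_zero_of_eq' := by
    intro v i j hv hij
    fin_cases i <;> fin_cases j
    · exact absurd rfl hij
    · have h : v 0 = v 1 := hv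
      show g (v 0) (v 1) = 0
      rw [h]; exact hd _
    · have h : v 0 = v 1 := hv.symm
      show g (v 0) (v 1) = 0
      rw [h]; exact hd _
    · exact absurd rfl hij

@[simp] lemma mkAlt2_apply (g : B → B → L) (hal har hsl hsr hd) (v : Fin 2 → B) :
    mkAlt2 (R := R) g hal har hsl hsr hd v = g (v 0) (v 1) := rfl

lemma alt2_addl (f : B [⋀^Fin 2]→ₗ[R] L) (a a' b : B) :
    f ![a + a', b] = f ![a, b] + f ![a', b] := by
  have h : ∀ c : B, ![c, b] = Function.update ![a, b] 0 c := by
    intro c; ext i; fin_cases i <;> simp [Function.update]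
  rw [h (a+a'), h a, h a', AlternatingMap.map_update_add]
  simp

lemma alt2_addr (f : B [⋀^Fin 2]→ₗ[R] L) (a b b' : B) :
    f ![a, b + b'] = f ![a, b] + f ![a, b'] := by
  have h : ∀ c : B, ![a, c] = Function.update ![a, b] 1 c := by
    intro c; ext i; fin_cases i <;> simp [Function.update]
  rw [h (b+b'), h b, h b', AlternatingMap.map_update_add]
  simp

lemma alt2_smull (f : B [⋀^Fin 2]→ₗ[R] L) (c : R) (a b : B) :
    f ![c • a, b] = c • f ![a, b] := by
  have h : ∀ d : B, ![d, b] = Function.update ![a, b] 0 d := by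
    intro d; ext i; fin_cases i <;> simp [Function.update]
  rw [h (c • a), h a, AlternatingMap.map_update_smul]
  simp

lemma alt2_smulr (f : B [⋀^Fin 2]→ₗ[R] L) (c : R) (a b : B) :
    f ![a, c • b] = c • f ![a, b] := by
  have h : ∀ d : B, ![a, d] = Function.update ![a, b] 1 d := by
    intro d; ext i; fin_cases i <;> simp [Function.update]
  rw [h (c • b), h b, AlternatingMap.map_update_smul]
  simp

lemma alt2_diag (f : B [⋀^Fin 2]→ₗ[R] L) (a : B) : f ![a, a] = 0 :=
  f.map_eq_zero_of_eq _ (by simp : (![a,a]) 0 = ![a,a] 1) (by decide)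

lemma alt2_swap (f : B [⋀^Fin 2]→ₗ[R] L) (a b : B) : f ![b, a] = - f ![a, b] := by
  have h := alt2_diag f (a + b)
  rw [alt2_addl, alt2_addr, alt2_addr, alt2_diag, alt2_diag] at h
  simp only [zero_add, add_zero] at h
  exact eq_neg_of_add_eq_zero_right h

end AuxAlt

lemma dform_two_apply {B M : Type*} [LieRing B] [AddCommGroup M]
    (α : B → M → M) (ξ : (Fin 2 → B) → M) (s : Fin 3 → B) :
    dform α 2 ξ s =
      α (s 0) (ξ ![s 1, s 2]) - α (s 1) (ξ ![s 0, s 2]) + α (s 2) (ξ ![s 0, s 1])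
        - ξ ![⁅s 0, s 1⁆, s 2] + ξ ![⁅s 0, s 2⁆, s 1] - ξ ![⁅s 1, s 2⁆, s 0] := by
  have e0 : s ∘ Fin.succAbove 0 = ![s 1, s 2] := by ext i; fin_cases i <;> rfl
  have e1 : s ∘ Fin.succAbove 1 = ![s 0, s 2] := by ext i; fin_cases i <;> rfl
  have e2 : s ∘ Fin.succAbove 2 = ![s 0, s 1] := by ext i; fin_cases i <;> rfl
  have f00 : (fun m : Fin 2 =>
      if hm : (m : ℕ) = 0 then ⁅s 0, s (Fin.succAbove 0 0)⁆
      else s (Fin.succAbove 0 (skipIdx 0 ⟨(m : ℕ) - 1, by have := m.isLt; omega⟩)))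
      = ![⁅s 0, s 1⁆, s 2] := by
    ext i; fin_cases i <;> rfl
  have f01 : (fun m : Fin 2 =>
      if hm : (m : ℕ) = 0 then ⁅s 0, s (Fin.succAbove 0 1)⁆
      else s (Fin.succAbove 0 (skipIdx 1 ⟨(m : ℕ) - 1, by have := m.isLt; omega⟩)))
      = ![⁅s 0, s 2⁆, s 1] := by
    ext i; fin_cases i <;> rfl
  have f11 : (fun m : Fin 2 =>
      if hm : (m : ℕ) = 0 then ⁅s 1, s (Fin.succAbove 1 1)⁆
      else s (Fin.succAbove 1 (skipIdx 1 ⟨(m : ℕ) - 1, by have := m.isLt; omega⟩)))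
      = ![⁅s 1, s 2⁆, s 0] := by
    ext i; fin_cases i <;> rfl
  unfold dform
  rw [Fin.sum_univ_three, Fin.sum_univ_three, Fin.sum_univ_two, Fin.sum_univ_two,
    Fin.sum_univ_two]
  rw [e0, e1, e2, f00, f01, f11]
  norm_num
  abel

section AuxExt
variable {k : Type u} [Field k] {B : Type w} [LieRing B]
  {L : Type x} [LieRing L] [LieAlgebra k L]

set_option maxHeartbeats 2000000 in
lemma jacobi_key (α : B → L →ₗ[k] L) (P : B → B → L)
    (hD : ∀ (b : B) (l l' : L), α b ⁅l, l'⁆ = ⁅α b l, l'⁆ + ⁅l, α b l'⁆)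
    (hF : ∀ (a b : B) (l : L), ⁅P a b, l⁆ = α a (α b l) - α b (α a l) - α ⁅a, b⁆ l)
    (hPswap : ∀ a b : B, P b a = - P a b)
    (hdP : ∀ b₁ b₂ b₃ : B, α b₁ (P b₂ b₃) = α b₂ (P b₁ b₃) - α b₃ (P b₁ b₂)
      + P ⁅b₁, b₂⁆ b₃ - P ⁅b₁, b₃⁆ b₂ + P ⁅b₂, b₃⁆ b₁)
    (l₁ l₂ l₃ : L) (b₁ b₂ b₃ : B) :
    ⁅l₁, ⁅l₂, l₃⁆ + α b₂ l₃ - α b₃ l₂ + P b₂ b₃⁆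
      + α b₁ (⁅l₂, l₃⁆ + α b₂ l₃ - α b₃ l₂ + P b₂ b₃)
      - α ⁅b₂, b₃⁆ l₁ + P b₁ ⁅b₂, b₃⁆
    = (⁅⁅l₁, l₂⁆ + α b₁ l₂ - α b₂ l₁ + P b₁ b₂, l₃⁆ + α ⁅b₁, b₂⁆ l₃
        - α b₃ (⁅l₁, l₂⁆ + α b₁ l₂ - α b₂ l₁ + P b₁ b₂) + P ⁅b₁, b₂⁆ b₃)
      + (⁅l₂, ⁅l₁, l₃⁆ + α b₁ l₃ - α b₃ l₁ + P b₁ b₃⁆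
        + α b₂ (⁅l₁, l₃⁆ + α b₁ l₃ - α b₃ l₁ + P b₁ b₃)
        - α ⁅b₁, b₃⁆ l₂ + P b₂ ⁅b₁, b₃⁆) := by
  have e1 : ⁅l₁, P b₂ b₃⁆ = -(α b₂ (α b₃ l₁) - α b₃ (α b₂ l₁) - α ⁅b₂, b₃⁆ l₁) := by
    rw [← lie_skew, hF]
  have e2 : ⁅l₂, P b₁ b₃⁆ = -(α b₁ (α b₃ l₂) - α b₃ (α b₁ l₂) - α ⁅b₁, b₃⁆ l₂) := by
    rw [← lie_skew, hF]
  simp only [lie_add, lie_sub, add_lie, sub_lie, map_add, map_sub]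
  rw [hD b₁ l₂ l₃]
  rw [hD b₃ l₁ l₂]
  rw [hD b₂ l₁ l₃]
  rw [hF b₁ b₂ l₃]
  rw [e1]
  rw [e2]
  rw [hPswap ⁅b₂, b₃⁆ b₁]
  rw [hPswap ⁅b₁, b₃⁆ b₂]
  rw [hdP b₁ b₂ b₃]
  rw [leibniz_lie l₁ l₂ l₃]
  rw [show ⁅l₂, (α b₃) l₁⁆ = -⁅(α b₃) l₁, l₂⁆ from (lie_skew _ _).symm]
  abel

variable (α : B → L →ₗ[k] L) (P : B → B → L)

/-- The twisted bracket on `L × B`. -/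
def extBracket (x y : ULift.{v} (L × B)) : ULift.{v} (L × B) :=
  ULift.up (⁅x.down.1, y.down.1⁆ + α x.down.2 y.down.1 - α y.down.2 x.down.1
      + P x.down.2 y.down.2, ⁅x.down.2, y.down.2⁆)

set_option maxHeartbeats 1000000 in
@[reducible]
def extLieRing
    (hadd : ∀ b b' : B, α (b + b') = α b + α b')
    (hD : ∀ (b : B) (l l' : L), α b ⁅l, l'⁆ = ⁅α b l, l'⁆ + ⁅l, α b l'⁆)
    (hPal : ∀ a a' b : B, P (a + a') b = P a b + P a' b)
    (hPar : ∀ a b b' : B, P a (b + b') = P a b + P a b')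
    (hPd : ∀ a : B, P a a = 0)
    (hPswap : ∀ a b : B, P b a = - P a b)
    (hF : ∀ (a b : B) (l : L), ⁅P a b, l⁆ = α a (α b l) - α b (α a l) - α ⁅a, b⁆ l)
    (hdP : ∀ b₁ b₂ b₃ : B, α b₁ (P b₂ b₃) = α b₂ (P b₁ b₃) - α b₃ (P b₁ b₂)
      + P ⁅b₁, b₂⁆ b₃ - P ⁅b₁, b₃⁆ b₂ + P ⁅b₂, b₃⁆ b₁) :
    LieRing (ULift.{v} (L × B)) :=
  { (inferInstance : AddCommGroup (ULift.{v} (L × B))) with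
    bracket := extBracket α P
    add_lie := by
      intro x y z
      apply ULift.down_injective
      refine Prod.ext ?_ ?_
      · show ⁅x.down.1 + y.down.1, z.down.1⁆ + α (x.down.2 + y.down.2) z.down.1
          - α z.down.2 (x.down.1 + y.down.1) + P (x.down.2 + y.down.2) z.down.2
          = (⁅x.down.1, z.down.1⁆ + α x.down.2 z.down.1 - α z.down.2 x.down.1
              + P x.down.2 z.down.2)
            + (⁅y.down.1, z.down.1⁆ + α y.down.2 z.down.1 - α z.down.2 y.down.1
              + P y.down.2 z.down.2)
        rw [hadd, hPal, add_lie, map_add]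
        simp only [LinearMap.add_apply]
        abel
      · exact add_lie _ _ _
    lie_add := by
      intro x y z
      apply ULift.down_injective
      refine Prod.ext ?_ ?_
      · show ⁅x.down.1, y.down.1 + z.down.1⁆ + α x.down.2 (y.down.1 + z.down.1)
          - α (y.down.2 + z.down.2) x.down.1 + P x.down.2 (y.down.2 + z.down.2)
          = (⁅x.down.1, y.down.1⁆ + α x.down.2 y.down.1 - α y.down.2 x.down.1
              + P x.down.2 y.down.2)
            + (⁅x.down.1, z.down.1⁆ + α x.down.2 z.down.1 - α z.down.2 x.down.1
              + P x.down.2 z.down.2)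
        rw [hadd, hPar, lie_add, map_add]
        simp only [LinearMap.add_apply]
        abel
      · exact lie_add _ _ _
    lie_self := by
      intro x
      apply ULift.down_injective
      refine Prod.ext ?_ ?_
      · show ⁅x.down.1, x.down.1⁆ + α x.down.2 x.down.1 - α x.down.2 x.down.1
          + P x.down.2 x.down.2 = 0
        rw [lie_self, hPd]
        abel
      · exact lie_self _
    leibniz_lie := by
      intro x y z
      apply ULift.down_injective
      refine Prod.ext ?_ ?_
      · exact jacobi_key α P hD hF hPswap hdP x.down.1 y.down.1 z.down.1
          x.down.2 y.down.2 z.down.2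
      · exact leibniz_lie _ _ _ }

end AuxExt

set_option maxHeartbeats 4000000 in
/-- Let `B` be a `(k,R)`-Lie–Rinehart algebra, projective over `R`, `L`
an `R`-Lie algebra and `ᾱ : B → Out_D(L)` a coupling (represented here by a
connection `α₀ : B → Der_D(L)` whose curvature takes values in `ad(L)`; lifts of `ᾱ`
are exactly the connections differing from `α₀` by `ad` of a 1-form).  Then an
extension `0 → L → A → B → 0` of Lie–Rinehart algebras inducing `ᾱ` exists if and
only if the obstruction class `ob(ᾱ) = [d_α ρ] ∈ H³(B; Z(L))` vanishes, i.e. iff for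
some lifting pair `(α, ρ)` of `ᾱ` the cocycle `d_α ρ` is the coboundary `d_ᾱ w` of a
central-valued 2-form `w`. -/
theorem extension_exists_iff_obstruction_vanishes
    {k : Type u} [Field k] {R : Type v} [CommRing R] [Algebra k R]
    {B : Type w} [LieRing B] [LieAlgebra k B] [Module R B] [IsScalarTower k R B]
    [Module.Projective R B]
    {L : Type x} [LieRing L] [LieAlgebra k L] [LieAlgebra R L] [IsScalarTower k R L]
    (aB : B →ₗ[R] Derivation k R R)
    (hLeibB : ∀ (s t : B) (f : R), ⁅s, f • t⁆ = f • ⁅s, t⁆ + aB s f • t)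
    -- the coupling `ᾱ`, represented by a connection `α₀ : B → Der_D(L)`:
    (α₀ : B → L →ₗ[k] L)
    (h₀add : ∀ b b' : B, α₀ (b + b') = α₀ b + α₀ b')
    (h₀smul : ∀ (f : R) (b : B) (l : L), α₀ (f • b) l = f • α₀ b l)
    (h₀D : ∀ (b : B) (l l' : L), α₀ b ⁅l, l'⁆ = ⁅α₀ b l, l'⁆ + ⁅l, α₀ b l'⁆)
    (h₀Leib : ∀ (b : B) (f : R) (l : L), α₀ b (f • l) = f • α₀ b l + aB b f • l)
    (h₀coupling : ∀ b₁ b₂ : B, ∃ l₀ : L, ∀ l : L,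
      α₀ b₁ (α₀ b₂ l) - α₀ b₂ (α₀ b₁ l) - α₀ ⁅b₁, b₂⁆ l = ⁅l₀, l⁆) :
    -- existence of a Lie–Rinehart extension `0 → L → A → B → 0` inducing `ᾱ` …
    (∃ (A : Type (max v w x)) (_ : LieRing A) (_ : Module R A)
        (aA : A →ₗ[R] Derivation k R R) (ι : L →ₗ[R] A) (π : A →ₗ[R] B),
        (∀ (x y : A) (f : R), ⁅x, f • y⁆ = f • ⁅x, y⁆ + aA x f • y) ∧
        Function.Injective ι ∧ Function.Surjective π ∧
        (∀ l l' : L, ι ⁅l, l'⁆ = ⁅ι l, ι l'⁆) ∧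
        (∀ x y : A, π ⁅x, y⁆ = ⁅π x, π y⁆) ∧
        LinearMap.range ι = LinearMap.ker π ∧
        (∀ x : A, aA x = aB (π x)) ∧
        -- the extension induces the coupling represented by `α₀`
        (∀ x : A, ∃ l₀ : L, ∀ l : L, ⁅x, ι l⁆ = ι (α₀ (π x) l + ⁅l₀, l⁆))) ↔
    -- … iff the obstruction class `ob(ᾱ)` vanishes:
    (∃ (α : B → L →ₗ[k] L) (ρ w : B [⋀^Fin 2]→ₗ[R] L),
        (∀ b b' : B, α (b + b') = α b + α b') ∧
        (∀ (f : R) (b : B) (l : L), α (f • b) l = f • α b l) ∧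
        (∀ (b : B) (l l' : L), α b ⁅l, l'⁆ = ⁅α b l, l'⁆ + ⁅l, α b l'⁆) ∧
        (∀ (b : B) (f : R) (l : L), α b (f • l) = f • α b l + aB b f • l) ∧
        -- `α` lifts the same coupling `ᾱ` as `α₀`
        (∀ b : B, ∃ l₀ : L, ∀ l : L, α b l = α₀ b l + ⁅l₀, l⁆) ∧
        -- `(α, ρ)` is a lifting pair: `ad_ρ = F_α`
        (∀ (b₁ b₂ : B) (l : L),
          α b₁ (α b₂ l) - α b₂ (α b₁ l) - α ⁅b₁, b₂⁆ l = ⁅ρ ![b₁, b₂], l⁆) ∧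
        -- `w` takes values in the center `Z(L)`
        (∀ (v : Fin 2 → B) (l : L), ⁅w v, l⁆ = 0) ∧
        -- `d_α ρ = d_ᾱ w`
        (∀ s : Fin 3 → B,
          dform (fun b x => α b x) 2 ⇑ρ s = dform (fun b x => α b x) 2 ⇑w s)) := by
  constructor
  · rintro ⟨A, instL, instM, aA, ι, π, hLeibA, hι, hπ, hιb, hπb, hrange, haA, hcoup⟩
    classical
    obtain ⟨σ, hσ⟩ := Module.projective_lifting_property π LinearMap.id hπ
    have hσb : ∀ b : B, π (σ b) = b := fun b => by
      have := DFunLike.congr_fun hσ b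
      simpa using this
    have hπι : ∀ l : L, π (ι l) = 0 := fun l => by
      have h : ι l ∈ LinearMap.ker π := hrange ▸ LinearMap.mem_range_self ι l
      exact LinearMap.mem_ker.mp h
    have haAι : ∀ l : L, aA (ι l) = 0 := fun l => by rw [haA, hπι, map_zero]
    have haAσ : ∀ b : B, aA (σ b) = aB b := fun b => by rw [haA, hσb]
    have hker : ∀ a : A, π a = 0 → ∃ l : L, ι l = a := fun a ha => by
      have h : a ∈ LinearMap.range ι := by rw [hrange]; exact LinearMap.mem_ker.mpr ha
      exact h
    choose inv hinv using hker
    -- bracket with scalar on the left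
    have hslA : ∀ (x y : A) (f : R), ⁅f • x, y⁆ = f • ⁅x, y⁆ - aA y f • x := by
      intro x y f
      rw [show ⁅f • x, y⁆ = -⁅y, f • x⁆ from (lie_skew _ _).symm, hLeibA,
        show ⁅x, y⁆ = -⁅y, x⁆ from (lie_skew _ _).symm]
      simp only [smul_neg]
      abel
    have hslB : ∀ (a b : B) (f : R), ⁅f • a, b⁆ = f • ⁅a, b⁆ - aB b f • a := by
      intro a b f
      rw [show ⁅f • a, b⁆ = -⁅b, f • a⁆ from (lie_skew _ _).symm, hLeibB,
        show ⁅a, b⁆ = -⁅b, a⁆ from (lie_skew _ _).symm]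
      simp only [smul_neg]
      abel
    -- the connection α
    have hπbr : ∀ (b : B) (l : L), π ⁅σ b, ι l⁆ = 0 := fun b l => by
      rw [hπb, hπι, lie_zero]
    set αf : B → L → L := fun b l => inv ⁅σ b, ι l⁆ (hπbr b l) with hαfdef
    have hcα : ∀ (b : B) (l : L), ι (αf b l) = ⁅σ b, ι l⁆ := fun b l => hinv _ _
    set α : B → L →ₗ[k] L := fun b =>
      { toFun := αf b
        map_add' := fun l l' => by
          apply hι
          rw [hcα, map_add, map_add, hcα, hcα, lie_add]
        map_smul' := fun c l => by
          apply hι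
          rw [hcα, ← algebraMap_smul R c l, map_smul, hLeibA, haAσ,
            Derivation.map_algebraMap, zero_smul, add_zero, ← hcα b l, ← map_smul,
            algebraMap_smul]
          rfl } with hαdef
    have hα_apply : ∀ (b : B) (l : L), α b l = αf b l := fun _ _ => rfl
    -- the 2-form ρ
    have hπρ : ∀ b₁ b₂ : B, π (⁅σ b₁, σ b₂⁆ - σ ⁅b₁, b₂⁆) = 0 := fun b₁ b₂ => by
      rw [map_sub, hπb, hσb, hσb, hσb, sub_self]
    set ρf : B → B → L := fun b₁ b₂ => inv _ (hπρ b₁ b₂) with hρfdef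
    have hcρ : ∀ b₁ b₂ : B, ι (ρf b₁ b₂) = ⁅σ b₁, σ b₂⁆ - σ ⁅b₁, b₂⁆ :=
      fun _ _ => hinv _ _
    have pal : ∀ a a' b : B, ρf (a + a') b = ρf a b + ρf a' b := by
      intro a a' b
      apply hι
      simp only [map_add, hcρ, add_lie]
      abel
    have par : ∀ a b b' : B, ρf a (b + b') = ρf a b + ρf a b' := by
      intro a b b'
      apply hι
      simp only [map_add, hcρ, lie_add]
      abel
    have psl : ∀ (f : R) (a b : B), ρf (f • a) b = f • ρf a b := by
      intro f a b
      apply hι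
      rw [map_smul, hcρ, hcρ]
      simp only [map_smul, hslA, hslB, map_sub, haAσ, smul_sub]
      abel
    have psr : ∀ (f : R) (a b : B), ρf a (f • b) = f • ρf a b := by
      intro f a b
      apply hι
      rw [map_smul, hcρ, hcρ]
      simp only [map_smul, hLeibA, hLeibB, map_add, haAσ, smul_sub]
      abel
    have pd : ∀ a : B, ρf a a = 0 := by
      intro a
      apply hι
      rw [hcρ, map_zero]
      simp
    refine ⟨α, mkAlt2 (R := R) ρf pal par psl psr pd, 0, ?_, ?_, ?_, ?_, ?_, ?_, ?_, ?_⟩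
    · -- additivity
      intro b b'
      ext l
      simp only [LinearMap.add_apply, hα_apply]
      apply hι
      rw [hcα, map_add, add_lie, ← hcα b l, ← hcα b' l, ← map_add]
    · -- R-linearity
      intro f b l
      simp only [hα_apply]
      apply hι
      rw [hcα, map_smul σ, hslA, haAι, map_smul, hcα]
      simp
    · -- derivation property
      intro b l l'
      simp only [hα_apply]
      apply hι
      rw [hcα, hιb, leibniz_lie, ← hcα b l, ← hcα b l', ← hιb, ← hιb, ← map_add, map_add]
    · -- Leibniz property
      intro b f l
      simp only [hα_apply]
      apply hι
      rw [hcα, map_smul, hLeibA, haAσ, map_add, map_smul, map_smul, hcα]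
    · -- lifts the coupling
      intro b
      obtain ⟨l₀, h⟩ := hcoup (σ b)
      refine ⟨l₀, fun l => ?_⟩
      apply hι
      rw [hα_apply, hcα, h l, hσb]
    · -- lifting pair identity
      intro b₁ b₂ l
      simp only [hα_apply, mkAlt2_apply, Matrix.cons_val_zero, Matrix.cons_val_one,
        Matrix.head_cons]
      apply hι
      rw [map_sub, map_sub, hcα, hcα, hcα, hcα, hcα, hιb, hcρ, sub_lie,
        leibniz_lie (σ b₁) (σ b₂) (ι l)]
      abel
    · -- w is central
      intro v l
      exact zero_lie l
    · -- the obstruction cocycle vanishes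
      intro s
      rw [dform_two_apply, dform_two_apply]
      simp only [AlternatingMap.zero_apply, map_zero, sub_zero, add_zero,
        zero_sub, neg_zero, zero_add]
      have main : ∀ a b c : B,
          ⁅σ a, ⁅σ b, σ c⁆ - σ ⁅b, c⁆⁆ - ⁅σ b, ⁅σ a, σ c⁆ - σ ⁅a, c⁆⁆
            + ⁅σ c, ⁅σ a, σ b⁆ - σ ⁅a, b⁆⁆
            - (⁅σ ⁅a, b⁆, σ c⁆ - σ ⁅⁅a, b⁆, c⁆) + (⁅σ ⁅a, c⁆, σ b⁆ - σ ⁅⁅a, c⁆, b⁆)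
            - (⁅σ ⁅b, c⁆, σ a⁆ - σ ⁅⁅b, c⁆, a⁆) = 0 := by
        intro a b c
        have hB : ⁅⁅a, b⁆, c⁆ - ⁅⁅a, c⁆, b⁆ + ⁅⁅b, c⁆, a⁆ = (0 : B) := by
          rw [show ⁅⁅a, c⁆, b⁆ = -⁅b, ⁅a, c⁆⁆ from (lie_skew _ _).symm,
            show ⁅⁅b, c⁆, a⁆ = -⁅a, ⁅b, c⁆⁆ from (lie_skew _ _).symm,
            leibniz_lie a b c]
          abel
        have hσ0 : σ ⁅⁅a, b⁆, c⁆ - σ ⁅⁅a, c⁆, b⁆ + σ ⁅⁅b, c⁆, a⁆ = 0 := by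
          rw [← map_sub, ← map_add, hB, map_zero]
        simp only [lie_sub]
        rw [leibniz_lie (σ a) (σ b) (σ c),
          show ⁅σ c, ⁅σ a, σ b⁆⁆ = -⁅⁅σ a, σ b⁆, σ c⁆ from (lie_skew _ _).symm,
          show ⁅σ ⁅a, b⁆, σ c⁆ = -⁅σ c, σ ⁅a, b⁆⁆ from (lie_skew _ _).symm,
          show ⁅σ ⁅a, c⁆, σ b⁆ = -⁅σ b, σ ⁅a, c⁆⁆ from (lie_skew _ _).symm,
          show ⁅σ ⁅b, c⁆, σ a⁆ = -⁅σ a, σ ⁅b, c⁆⁆ from (lie_skew _ _).symm]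
        rw [← sub_eq_zero]
        rw [← sub_eq_zero] at hσ0
        abel_nf at hσ0 ⊢
        first
        | exact hσ0
        | (convert hσ0 using 2 <;> abel)
      apply hι
      rw [map_zero]
      simp only [map_sub, map_add, mkAlt2_apply, Matrix.cons_val_zero, Matrix.cons_val_one,
        Matrix.head_cons, hα_apply, hcα, hcρ, hιb, lie_sub]
      have m := main (s 0) (s 1) (s 2)
      simp only [lie_sub, sub_lie] at m
      rw [← sub_eq_zero] at m ⊢
      abel_nf at m ⊢
      first
      | exact m
      | (convert m using 2 <;> abel)
  · rintro ⟨α, ρ, w, hadd, hsmul, hD, hLb, hlift, hρ, hw, hdeq⟩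
    classical
    set ρ' : B [⋀^Fin 2]→ₗ[R] L := ρ - w with hρ'def
    have hsub : ∀ v : Fin 2 → B, ρ' v = ρ v - w v := fun v => rfl
    have hα0 : ∀ l : L, α 0 l = 0 := by
      intro l
      have h := hsmul 0 0 l
      simpa using h
    have hF : ∀ (a b : B) (l : L),
        ⁅ρ' ![a, b], l⁆ = α a (α b l) - α b (α a l) - α ⁅a, b⁆ l := by
      intro a b l
      rw [hsub, sub_lie, hw, sub_zero]
      exact (hρ a b l).symm
    have hPswap : ∀ a b : B, ρ' ![b, a] = -ρ' ![a, b] := alt2_swap ρ'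
    have hdP : ∀ b₁ b₂ b₃ : B, α b₁ (ρ' ![b₂, b₃])
        = α b₂ (ρ' ![b₁, b₃]) - α b₃ (ρ' ![b₁, b₂])
          + ρ' ![⁅b₁, b₂⁆, b₃] - ρ' ![⁅b₁, b₃⁆, b₂] + ρ' ![⁅b₂, b₃⁆, b₁] := by
      intro b₁ b₂ b₃
      have h := hdeq ![b₁, b₂, b₃]
      rw [dform_two_apply, dform_two_apply] at h
      simp only [Matrix.cons_val_zero, Matrix.cons_val_one, Matrix.head_cons,
        Matrix.cons_val_two, Matrix.tail_cons] at h
      simp only [hsub, map_sub]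
      rw [← sub_eq_zero] at h ⊢
      abel_nf at h ⊢
      first
      | exact h
      | (convert h using 2 <;> abel)
    letI instLie : LieRing (ULift.{v} (L × B)) :=
      extLieRing α (fun a b => ρ' ![a, b]) hadd hD
        (fun a a' b => alt2_addl ρ' a a' b) (fun a b b' => alt2_addr ρ' a b b')
        (fun a => alt2_diag ρ' a) (fun a b => hPswap a b) hF hdP
    have brk : ∀ x y : ULift.{v} (L × B),
        ⁅x, y⁆ = extBracket α (fun a b => ρ' ![a, b]) x y := fun _ _ => rfl
    refine ⟨ULift.{v} (L × B), instLie, inferInstance,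
      aB ∘ₗ ((LinearMap.snd R L B) ∘ₗ
        (ULift.moduleEquiv : ULift.{v} (L × B) ≃ₗ[R] L × B).toLinearMap),
      ((ULift.moduleEquiv : ULift.{v} (L × B) ≃ₗ[R] L × B).symm.toLinearMap ∘ₗ
        LinearMap.inl R L B),
      (LinearMap.snd R L B) ∘ₗ
        (ULift.moduleEquiv : ULift.{v} (L × B) ≃ₗ[R] L × B).toLinearMap,
      ?_, ?_, ?_, ?_, ?_, ?_, ?_, ?_⟩
    · -- Leibniz rule
      intro xx yy f
      rw [brk, brk]
      apply ULift.down_injective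
      refine Prod.ext ?_ ?_
      · show ⁅xx.down.1, f • yy.down.1⁆ + α xx.down.2 (f • yy.down.1)
          - α (f • yy.down.2) xx.down.1 + ρ' ![xx.down.2, f • yy.down.2]
          = f • (⁅xx.down.1, yy.down.1⁆ + α xx.down.2 yy.down.1
              - α yy.down.2 xx.down.1 + ρ' ![xx.down.2, yy.down.2])
            + aB xx.down.2 f • yy.down.1
        rw [lie_smul, hLb, hsmul, alt2_smulr]
        simp only [smul_add, smul_sub]
        abel
      · show ⁅xx.down.2, f • yy.down.2⁆
          = f • ⁅xx.down.2, yy.down.2⁆ + aB xx.down.2 f • yy.down.2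
        exact hLeibB _ _ _
    · -- ι injective
      intro a b h
      simpa using congrArg (fun z : ULift.{v} (L × B) => z.down.1) h
    · -- π surjective
      intro b
      exact ⟨ULift.up (0, b), rfl⟩
    · -- ι is a morphism
      intro l l'
      rw [brk]
      apply ULift.down_injective
      refine Prod.ext ?_ ?_
      · show ⁅l, l'⁆ = ⁅l, l'⁆ + α 0 l' - α 0 l + ρ' ![(0 : B), 0]
        rw [hα0, hα0, alt2_diag]
        abel
      · show (0 : B) = ⁅(0 : B), 0⁆
        simp
    · -- π is a morphism
      intro xx yy
      rfl
    · -- exactness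
      apply le_antisymm
      · rintro z ⟨l, rfl⟩
        simp only [LinearMap.mem_ker]
        rfl
      · intro z hz
        have hz2 : z.down.2 = 0 := hz
        exact ⟨z.down.1, by
          apply ULift.down_injective
          exact Prod.ext rfl hz2.symm⟩
    · -- anchor compatibility
      intro xx
      rfl
    · -- induced coupling
      intro xx
      obtain ⟨c, hc⟩ := hlift xx.down.2
      refine ⟨xx.down.1 + c, fun l => ?_⟩
      rw [brk]
      apply ULift.down_injective
      refine Prod.ext ?_ ?_
      · show ⁅xx.down.1, l⁆ + α xx.down.2 l - α 0 xx.down.1 + ρ' ![xx.down.2, (0 : B)]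
          = α₀ xx.down.2 l + ⁅xx.down.1 + c, l⁆
        have h0 : ρ' ![xx.down.2, (0 : B)] = 0 := by
          simpa using alt2_smulr ρ' 0 xx.down.2 0
        rw [hα0, h0, hc l, add_lie]
        abel
      · show ⁅xx.down.2, (0 : B)⁆ = 0
        simp
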